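/- Let R be a commutative ring with unity in which 1 can be written as a sum of two units, and let M be a right R-module. Then for every n ≥ 1 (including n = 1), the abelianization of GL_n(R) ⋉ Mⁿ is isomorphic to the abelianization of GL_n(R). -/

import Mathlib

/-- Matrix action on `Fin n → M` by matrix-vector multiplication. -/
def matSMul (R M : Type*) [CommRing R] [AddCommGroup M] [Module R M] (n : ℕ)
    (A : Matrix (Fin n) (Fin n) R) : AddMonoid.End (Fin n → M) :=
  AddMonoidHom.mk' (fun x i => ∑ j, A i j • x j) (by
    intro x y
    funext i
    simp [smul_add, Finset.sum_add_distrib])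

def matSMulHom (R M : Type*) [CommRing R] [AddCommGroup M] [Module R M] (n : ℕ) :
    Matrix (Fin n) (Fin n) R →* AddMonoid.End (Fin n → M) where
  toFun := matSMul R M n
  map_one' := by
    refine AddMonoidHom.ext fun x => funext fun i => ?_
    simp [matSMul, Matrix.one_apply, Finset.sum_ite_eq]
    rfl
  map_mul' A B := by
    refine AddMonoidHom.ext fun x => funext fun i => ?_
    show ∑ j, (A * B) i j • x j = ∑ k, A i k • ∑ j, B k j • x j
    simp only [Matrix.mul_apply, Finset.sum_smul, Finset.smul_sum, mul_smul]
    exact Finset.sum_comm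

def unitsEndToAddAut (P : Type*) [AddCommGroup P] : (AddMonoid.End P)ˣ →* Multiplicative (AddAut P) where
  toFun u := Multiplicative.ofAdd
    { toFun := u.val
      invFun := (↑u⁻¹ : AddMonoid.End P)
      left_inv := fun x => DFunLike.congr_fun u.inv_mul x
      right_inv := fun x => DFunLike.congr_fun u.mul_inv x
      map_add' := u.val.map_add }
  map_one' := rfl
  map_mul' _ _ := rfl

def addAutToMulAut (P : Type*) [AddGroup P] : Multiplicative (AddAut P) →* MulAut (Multiplicative P) where
  toFun e := AddEquiv.toMultiplicative e.toAdd
  map_one' := rfl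
  map_mul' _ _ := rfl

/-- The action of `GL n R` on the additive group `Mⁿ` (written multiplicatively). -/
def glAction (R M : Type*) [CommRing R] [AddCommGroup M] [Module R M] (n : ℕ) :
    GL (Fin n) R →* MulAut (Multiplicative (Fin n → M)) :=
  (addAutToMulAut _).comp ((unitsEndToAddAut _).comp (Units.map (matSMulHom R M n)))

section Aux
variable (R M : Type*) [CommRing R] [AddCommGroup M] [Module R M]

lemma glAction_apply (n : ℕ) (g : GL (Fin n) R) (m : Multiplicative (Fin n → M)) :
    (glAction R M n g) m
      = Multiplicative.ofAdd (fun i => ∑ j, (g : Matrix (Fin n) (Fin n) R) i j • m.toAdd j) :=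
  rfl

end Aux

/-- If `1` is a sum of two units of the commutative ring `R`, then for every
`n ≥ 1` the abelianization of `GL_n(R) ⋉ Mⁿ` is isomorphic to that of `GL_n(R)`. -/
theorem abelianization_gl_semidirect_of_unit_sum (R M : Type*) [CommRing R] [AddCommGroup M]
    [Module R M] (hu : ∃ u v : Rˣ, (u : R) + (v : R) = 1) (n : ℕ) (hn : 1 ≤ n) :
    Nonempty (Abelianization (Multiplicative (Fin n → M) ⋊[glAction R M n] GL (Fin n) R)
      ≃* Abelianization (GL (Fin n) R)) := by
  obtain ⟨u, v, huv⟩ := hu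
  set N := Multiplicative (Fin n → M)
  set G := GL (Fin n) R
  set SP := N ⋊[glAction R M n] G
  -- the scalar unit matrix
  set g : G := Units.map (algebraMap R (Matrix (Fin n) (Fin n) R)).toMonoidHom u with hg
  have hgact : ∀ m : N, (glAction R M n g) m
      = Multiplicative.ofAdd (fun i => (u : R) • m.toAdd i) := by
    intro m
    rw [glAction_apply]
    congr 1
    funext i
    have : ∀ j, (g : Matrix (Fin n) (Fin n) R) i j = if i = j then (u : R) else 0 := by
      intro j
      simp [hg, Matrix.algebraMap_matrix_apply]
    simp [this, ite_smul]
  have hv : (v : R) * (↑v⁻¹ : R) = 1 := by exact_mod_cast v.mul_inv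
  have hc : (-((u : R) * (↑v⁻¹ : R)) + (↑v⁻¹ : R)) = 1 := by
    linear_combination -(↑v⁻¹ : R) * huv + hv
  -- every inl element dies in the abelianization
  have key : ∀ x : N, Abelianization.of (SemidirectProduct.inl (φ := glAction R M n) x) = 1 := by
    intro x
    set m : N := Multiplicative.ofAdd (fun i => -((↑v⁻¹ : R) • x.toAdd i)) with hm
    have hx : x = (glAction R M n g) m * m⁻¹ := by
      rw [hgact]
      apply Multiplicative.toAdd.injective
      funext i
      show x.toAdd i = (u : R) • (-((↑v⁻¹ : R) • x.toAdd i)) + -(-((↑v⁻¹ : R) • x.toAdd i))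
      rw [smul_neg, neg_neg, smul_smul, ← neg_smul, ← add_smul, hc, one_smul]
    have hconj : SemidirectProduct.inl (φ := glAction R M n) ((glAction R M n g) m)
        = SemidirectProduct.inr g * SemidirectProduct.inl m * SemidirectProduct.inr g⁻¹ :=
      SemidirectProduct.inl_aut g m
    have h1 : Abelianization.of (SemidirectProduct.inl (φ := glAction R M n) ((glAction R M n g) m))
        = Abelianization.of (SemidirectProduct.inl (φ := glAction R M n) m) := by
      rw [hconj, map_inv, map_mul, map_mul, map_inv, mul_comm, ← mul_assoc,
        inv_mul_cancel, one_mul]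
    rw [hx]
    simp only [map_mul, map_inv, h1, mul_inv_cancel]
  -- the two homs
  let F : Abelianization SP →* Abelianization G :=
    Abelianization.lift (Abelianization.of.comp (SemidirectProduct.rightHom))
  let Ginv : Abelianization G →* Abelianization SP :=
    Abelianization.lift (Abelianization.of.comp (SemidirectProduct.inr))
  refine ⟨MonoidHom.toMulEquiv F Ginv ?_ ?_⟩
  · apply Abelianization.hom_ext
    ext x
    show Ginv (F (Abelianization.of x)) = Abelianization.of x
    rw [← SemidirectProduct.inl_left_mul_inr_right x, map_mul, key, one_mul]
    rw [show Ginv (F (Abelianization.of (SemidirectProduct.inr x.right)))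
        = Abelianization.of (SemidirectProduct.inr (φ := glAction R M n)
            (SemidirectProduct.rightHom (SemidirectProduct.inr (φ := glAction R M n) x.right)))
          from rfl,
      SemidirectProduct.rightHom_inr]
  · apply Abelianization.hom_ext
    ext x
    show F (Ginv (Abelianization.of x)) = Abelianization.of x
    rw [show Ginv (Abelianization.of x) = Abelianization.of (SemidirectProduct.inr x) from rfl,
      show F (Abelianization.of (SemidirectProduct.inr (φ := glAction R M n) x))
        = Abelianization.of (SemidirectProduct.rightHom (SemidirectProduct.inr (φ := glAction R M n) x)) from rfl,
      SemidirectProduct.rightHom_inr]
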